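/- Let T₀ ∪ K be an extension of T₀ with a set K of flat and linear clauses over Π₀ ∪ Σ, let T be a finite set of ground flat Π-terms closed under subterms containing the ground terms of K, and let M be a total model of T₀ ∪ K[T]. Then the restricted partial structure M|_T (extension functions defined only on tuples named by terms in T) is a weak partial model of T₀ ∪ K. -/
import Mathlib


open FirstOrder FirstOrder.Language

universe u v w x y

namespace PaperFOL

/-- A sentence is universal: the universal closure of a quantifier-free formula. -/
def IsUniversalSentence {L : FirstOrder.Language.{u, v}} (φ : L.Sentence) : Prop :=
  ∃ (n : ℕ) (ψ : L.BoundedFormula Empty n), ψ.IsQF ∧ φ = ψ.alls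

/-- Two theories over the same signature are co-theories iff they have the same
universal consequences. -/
def CoTheories {L : FirstOrder.Language.{u, v}} (T₁ T₂ : L.Theory) : Prop :=
  ∀ φ : L.Sentence, IsUniversalSentence φ → (T₁ ⊨ᵇ φ ↔ T₂ ⊨ᵇ φ)

/-- `T` is model complete: every embedding between models of `T` is elementary. -/
def IsModelComplete {L : FirstOrder.Language.{u, v}} (T : L.Theory) : Prop :=
  ∀ (M N : Type w) [L.Structure M] [L.Structure N], M ⊨ T → N ⊨ T →
    ∀ (f : M ↪[L] N) (k : ℕ) (φ : L.Formula (Fin k)) (x : Fin k → M),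
      φ.Realize (f ∘ x) ↔ φ.Realize x

/-- `T` allows quantifier elimination. -/
def HasQE {L : FirstOrder.Language.{u, v}} (T : L.Theory) : Prop :=
  ∀ {n : ℕ} (φ : L.BoundedFormula Empty n),
    ∃ ψ : L.BoundedFormula Empty n, ψ.IsQF ∧ T ⊨ᵇ φ.iff ψ

/-- `T` has the strong sub-amalgamation property. -/
def StrongSubAmalgamation {L : FirstOrder.Language.{u, v}} (T : L.Theory) : Prop :=
  ∀ (A M₁ M₂ : Type w) [L.Structure A] [L.Structure M₁] [L.Structure M₂],
    M₁ ⊨ T → M₂ ⊨ T →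
    ∀ (f₁ : A ↪[L] M₁) (f₂ : A ↪[L] M₂),
      ∃ (N : Theory.ModelType.{u, v, w} T) (g₁ : M₁ ↪[L] N) (g₂ : M₂ ↪[L] N),
        (∀ a, g₁ (f₁ a) = g₂ (f₂ a)) ∧
        (∀ m₁ m₂, g₁ m₁ = g₂ m₂ → ∃ a, m₁ = f₁ a ∧ m₂ = f₂ a)

end PaperFOL

namespace PaperLoc

variable {B E : FirstOrder.Language.{u, v}}

/-! ## Partial structures

A partial `(B.sum E)`-structure: total on the base signature `B`, with possibly partial
interpretations of the extension function symbols from `E`. -/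

structure PStruct (B E : FirstOrder.Language.{u, v}) (M : Type w) where
  bfun : ∀ {n : ℕ}, B.Functions n → (Fin n → M) → M
  brel : ∀ {n : ℕ}, B.Relations n → (Fin n → M) → Prop
  efun : ∀ {n : ℕ}, E.Functions n → (Fin n → M) → Option M
  erel : ∀ {n : ℕ}, E.Relations n → (Fin n → M) → Prop

/-- The total base reduct of a partial structure. -/
def PStruct.bStructure {M : Type w} (P : PStruct B E M) : B.Structure M :=
  { funMap := fun {_} f xs => P.bfun f xs
    RelMap := fun {_} r xs => P.brel r xs }

/-- The interpretation of the relation symbols of the full signature. -/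
def PStruct.relMap {M : Type w} (P : PStruct B E M) :
    ∀ {n : ℕ}, (B.sum E).Relations n → (Fin n → M) → Prop
  | _, Sum.inl r => P.brel r
  | _, Sum.inr r => P.erel r

/-- The partial structure corresponding to a total structure for the full signature. -/
def totalize {M : Type w} (S : (B.sum E).Structure M) : PStruct B E M where
  bfun := fun {_} f xs => S.funMap (Sum.inl f) xs
  brel := fun {_} r xs => S.RelMap (Sum.inl r) xs
  efun := fun {_} f xs => some (S.funMap (Sum.inr f) xs)
  erel := fun {_} r xs => S.RelMap (Sum.inr r) xs

/-- Partial evaluation of terms in a partial structure: `PRealize P v t x` holds iff the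
term `t` is defined under the valuation `v` and evaluates to `x`. -/
inductive PRealize {M : Type w} (P : PStruct B E M) {α : Type x} (v : α → M) :
    (B.sum E).Term α → M → Prop
  | var (a : α) : PRealize P v (Term.var a) (v a)
  | bfunc {n : ℕ} (f : B.Functions n) (ts : Fin n → (B.sum E).Term α) (xs : Fin n → M) :
      (∀ i, PRealize P v (ts i) (xs i)) →
      PRealize P v (Term.func (Sum.inl f) ts) (P.bfun f xs)
  | efunc {n : ℕ} (f : E.Functions n) (ts : Fin n → (B.sum E).Term α) (xs : Fin n → M) (y : M) :
      (∀ i, PRealize P v (ts i) (xs i)) → P.efun f xs = some y →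
      PRealize P v (Term.func (Sum.inr f) ts) y

/-! ## Syntax: literals and clauses -/

/-- Literals over a language `L` with (free) constants/variables from `γ`. -/
inductive Lit (L : FirstOrder.Language.{u, v}) (γ : Type w) where
  | eq (pos : Bool) (t₁ t₂ : L.Term γ)
  | rel (pos : Bool) (n : ℕ) (r : L.Relations n) (ts : Fin n → L.Term γ)

/-- A clause is a (finite) disjunction of literals. -/
abbrev Clause (L : FirstOrder.Language.{u, v}) (γ : Type w) := List (Lit L γ)

/-- The terms occurring (at the top level) in a literal. -/
def Lit.terms {L : FirstOrder.Language.{u, v}} {γ : Type x} : Lit L γ → Set (L.Term γ)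
  | .eq _ t₁ t₂ => {t₁, t₂}
  | .rel _ _ _ ts => Set.range ts

/-- Applying a substitution to a literal. -/
def Lit.subst {L : FirstOrder.Language.{u, v}} {γ : Type x} {δ : Type y} :
    Lit L γ → (γ → L.Term δ) → Lit L δ
  | .eq pos t₁ t₂, σ => .eq pos (t₁.subst σ) (t₂.subst σ)
  | .rel pos n r ts, σ => .rel pos n r (fun i => (ts i).subst σ)

/-- Renaming the variables/constants of a literal. -/
def Lit.relabel {L : FirstOrder.Language.{u, v}} {γ : Type x} {δ : Type y} :
    Lit L γ → (γ → δ) → Lit L δ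
  | .eq pos t₁ t₂, h => .eq pos (t₁.relabel h) (t₂.relabel h)
  | .rel pos n r ts, h => .rel pos n r (fun i => (ts i).relabel h)

/-- The subterm relation. -/
inductive Subterm {L : FirstOrder.Language.{u, v}} {γ : Type x} : L.Term γ → L.Term γ → Prop
  | refl (t : L.Term γ) : Subterm t t
  | func {n : ℕ} (f : L.Functions n) (ts : Fin n → L.Term γ) (i : Fin n) {t : L.Term γ} :
      Subterm t (ts i) → Subterm t (Term.func f ts)

/-- The variable/constant `c` occurs in the term `t`. -/
def VarInTerm {L : FirstOrder.Language.{u, v}} {γ : Type x} (c : γ) (t : L.Term γ) : Prop :=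
  Subterm (Term.var c) t

/-- A term is an extension term: its head symbol is an extension function symbol. -/
def IsExtTerm {γ : Type x} : (B.sum E).Term γ → Prop
  | Term.func (Sum.inr _) _ => True
  | _ => False

/-- A term contains no extension symbols (it is a pure base term). -/
inductive NoExt {γ : Type x} : (B.sum E).Term γ → Prop
  | var (a : γ) : NoExt (Term.var a)
  | func {n : ℕ} (f : B.Functions n) (ts : Fin n → (B.sum E).Term γ) :
      (∀ i, NoExt (ts i)) → NoExt (Term.func (Sum.inl f) ts)

/-- A term is quasi-flat: the arguments of every extension-headed subterm are pure base terms. -/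
def IsQuasiFlat {γ : Type x} (t : (B.sum E).Term γ) : Prop :=
  ∀ (s : (B.sum E).Term γ), Subterm s t →
    ∀ {n : ℕ} (f : E.Functions n) (ts : Fin n → (B.sum E).Term γ),
      s = Term.func (Sum.inr f) ts → ∀ i, NoExt (B := B) (E := E) (ts i)

/-- A term is flat: the arguments of every extension-headed subterm are
variables (resp. constants). -/
def IsFlatTerm {γ : Type x} (t : (B.sum E).Term γ) : Prop :=
  ∀ (s : (B.sum E).Term γ), Subterm s t →
    ∀ {n : ℕ} (f : E.Functions n) (ts : Fin n → (B.sum E).Term γ),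
      s = Term.func (Sum.inr f) ts → ∀ i, ∃ x : γ, ts i = Term.var x

/-- The term `t` occurs in the clause `D`. -/
def TermInClause {L : FirstOrder.Language.{u, v}} {γ : Type x}
    (t : L.Term γ) (D : Clause L γ) : Prop :=
  ∃ l ∈ D, ∃ s ∈ Lit.terms l, Subterm t s

/-- The term `t` occurs in some clause of the set `G`. -/
def TermInClauses {L : FirstOrder.Language.{u, v}} {γ : Type x}
    (t : L.Term γ) (G : Set (Clause L γ)) : Prop :=
  ∃ D ∈ G, TermInClause t D

/-- The variable `x` occurs in the clause `C`. -/
def VarInClause {L : FirstOrder.Language.{u, v}} {γ : Type x} (x : γ) (C : Clause L γ) : Prop :=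
  TermInClause (Term.var x) C

/-- The variable `x` occurs below an extension function in the clause `C`. -/
def VarBelowExt {γ : Type x} (x : γ) (C : Clause (B.sum E) γ) : Prop :=
  ∃ u : (B.sum E).Term γ, IsExtTerm (B := B) (E := E) u ∧ TermInClause u C ∧ VarInTerm x u

/-- A clause (with universally quantified variables) is flat w.r.t. the extension symbols. -/
def ClauseFlat {γ : Type x} (C : Clause (B.sum E) γ) : Prop :=
  ∀ l ∈ C, ∀ s ∈ Lit.terms l, IsFlatTerm (B := B) (E := E) s

/-- A clause is linear w.r.t. the extension symbols. -/
def ClauseLinear {γ : Type x} (C : Clause (B.sum E) γ) : Prop :=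
  (∀ u₁ u₂ : (B.sum E).Term γ,
    IsExtTerm (B := B) (E := E) u₁ → IsExtTerm (B := B) (E := E) u₂ →
    TermInClause u₁ C → TermInClause u₂ C →
    (∃ x, VarInTerm x u₁ ∧ VarInTerm x u₂) → u₁ = u₂) ∧
  (∀ u : (B.sum E).Term γ, TermInClause u C →
    ∀ {n : ℕ} (f : E.Functions n) (ts : Fin n → (B.sum E).Term γ),
      u = Term.func (Sum.inr f) ts →
      ∀ (i j : Fin n) (x : γ), ts i = Term.var x → ts j = Term.var x → i = j)

/-- A ground term `t` (over the signature only) occurs in the clause set `K`. -/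
def GroundTermOfK (K : Set (Clause (B.sum E) ℕ)) (t : (B.sum E).Term Empty) : Prop :=
  TermInClauses (t.relabel (Empty.elim : Empty → ℕ)) K

/-- The set of ground subterms of a set of ground clauses. -/
def stSet {L : FirstOrder.Language.{u, v}} {γ : Type x} (G : Set (Clause L γ)) :
    Set (L.Term γ) :=
  {t | TermInClauses t G}

/-! ## Instances of a clause set

`instancesC K S` is `K[S]`: the set of ground instances of clauses of `K` (over constants `γ`)
in which all terms starting with an extension function symbol belong to `S`. -/
def instancesC {γ : Type x} (K : Set (Clause (B.sum E) ℕ)) (S : Set ((B.sum E).Term γ)) :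
    Set (Clause (B.sum E) γ) :=
  { D | ∃ C ∈ K, ∃ σ : ℕ → (B.sum E).Term γ,
      D = C.map (fun l => l.subst σ) ∧
      ∀ t : (B.sum E).Term γ, IsExtTerm (B := B) (E := E) t → TermInClause t D → t ∈ S }

/-- `K[T]` for a set `T` of ground (variable-free) terms, keeping the result over the
variable type `ℕ`: instances where all extension terms are ground and belong to `T`, and
variables not occurring below an extension function are left unchanged. -/
def instancesGround (K : Set (Clause (B.sum E) ℕ)) (T : Set ((B.sum E).Term Empty)) :
    Set (Clause (B.sum E) ℕ) :=
  { D | ∃ C ∈ K, ∃ σ : ℕ → (B.sum E).Term ℕ,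
      D = C.map (fun l => l.subst σ) ∧
      (∀ x : ℕ, ¬ VarBelowExt (B := B) (E := E) x C → σ x = Term.var x) ∧
      (∀ t : (B.sum E).Term ℕ, IsExtTerm (B := B) (E := E) t → TermInClause t D →
        ∃ t₀ ∈ T, t = t₀.relabel (Empty.elim : Empty → ℕ)) }

/-! ## Semantics of literals and clauses in partial structures -/

/-- All terms of the literal are defined in the partial structure. -/
def LitDefined {M : Type w} (P : PStruct B E M) {γ : Type x} (v : γ → M) :
    Lit (B.sum E) γ → Prop
  | .eq _ t₁ t₂ => (∃ x, PRealize P v t₁ x) ∧ (∃ x, PRealize P v t₂ x)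
  | .rel _ _ _ ts => ∀ i, ∃ x, PRealize P v (ts i) x

/-- The literal is defined and true in the partial structure. -/
def LitHolds {M : Type w} (P : PStruct B E M) {γ : Type x} (v : γ → M) :
    Lit (B.sum E) γ → Prop
  | .eq pos t₁ t₂ => ∃ x₁ x₂, PRealize P v t₁ x₁ ∧ PRealize P v t₂ x₂ ∧
      (if pos then x₁ = x₂ else x₁ ≠ x₂)
  | .rel pos n r ts => ∃ xs : Fin n → M, (∀ i, PRealize P v (ts i) (xs i)) ∧
      (if pos then P.relMap r xs else ¬ P.relMap r xs)

/-- Weak satisfaction of a clause in a partial structure under a valuation: either some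
literal has an undefined term, or some literal is true. -/
def WeakSatClause {M : Type w} (P : PStruct B E M) {γ : Type x} (v : γ → M)
    (D : Clause (B.sum E) γ) : Prop :=
  (∃ l ∈ D, ¬ LitDefined P v l) ∨ (∃ l ∈ D, LitHolds P v l)

/-- A weak partial model of `T₀ ∪ K`: the (total) base reduct is a model of the base theory
`T₀`, and every clause of `K` is weakly satisfied under every valuation. -/
structure WeakModel (T₀ : B.Theory) (K : Set (Clause (B.sum E) ℕ)) (M : Type w)
    (P : PStruct B E M) : Prop where
  nonempty : Nonempty M
  base : @Theory.Model B M P.bStructure T₀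
  clauses : ∀ C ∈ K, ∀ v : ℕ → M, WeakSatClause P v C

/-- A weak embedding of partial structures. -/
structure WeakEmb {M N : Type w} (P : PStruct B E M) (Q : PStruct B E N) (h : M → N) :
    Prop where
  inj : Function.Injective h
  bfun : ∀ {n : ℕ} (f : B.Functions n) (xs : Fin n → M), h (P.bfun f xs) = Q.bfun f (h ∘ xs)
  brel : ∀ {n : ℕ} (r : B.Relations n) (xs : Fin n → M), P.brel r xs ↔ Q.brel r (h ∘ xs)
  erel : ∀ {n : ℕ} (r : E.Relations n) (xs : Fin n → M), P.erel r xs ↔ Q.erel r (h ∘ xs)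
  efun : ∀ {n : ℕ} (f : E.Functions n) (xs : Fin n → M) (y : M),
      P.efun f xs = some y → Q.efun f (h ∘ xs) = some (h y)

/-- The set of defined extension terms (with the elements of `M` as constants) of a
partial structure; this is `T(A)` in the paper. -/
def definedExtTerms {M : Type w} (P : PStruct B E M) : Set ((B.sum E).Term M) :=
  { t | ∃ (n : ℕ) (f : E.Functions n) (xs : Fin n → M),
      (P.efun f xs).isSome ∧ t = Term.func (Sum.inr f) (fun i => Term.var (xs i)) }

/-- Condition `(Comp_f)`: every weak partial model of `T₀ ∪ K` (total on the base part,
with finitely many defined extension terms) weakly embeds, via the identity map,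
into a total model of `T₀ ∪ K` with the same support. -/
def CompF (T₀ : B.Theory) (K : Set (Clause (B.sum E) ℕ)) : Prop :=
  ∀ (M : Type w) (P : PStruct B E M),
    WeakModel T₀ K M P → (definedExtTerms P).Finite →
    ∃ S : (B.sum E).Structure M,
      WeakModel T₀ K M (totalize S) ∧ WeakEmb P (totalize S) (id : M → M)

open scoped Classical in
/-- The restriction `M|_T` of a total structure to a set `T` of ground terms: the extension
functions are only defined on tuples of elements named by the terms of `T`. -/
noncomputable def restrict {M : Type w} (S : (B.sum E).Structure M)
    (T : Set ((B.sum E).Term Empty)) : PStruct B E M where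
  bfun := fun {_} f xs => S.funMap (Sum.inl f) xs
  brel := fun {_} r xs => S.RelMap (Sum.inl r) xs
  erel := fun {_} r xs => S.RelMap (Sum.inr r) xs
  efun := fun {n} f xs =>
    if ∃ ts : Fin n → (B.sum E).Term Empty,
        (Term.func (Sum.inr f) ts ∈ T ∧
          ∀ i, @Term.realize (B.sum E) M S Empty (fun e => e.elim) (ts i) = xs i)
    then some (S.funMap (Sum.inr f) xs) else none

/-! ## Satisfiability of sets of ground clauses -/

/-- `A` is satisfiable w.r.t. `T₀` together with the uninterpreted extension symbols:
some total structure for the full signature whose base reduct is a model of `T₀`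
satisfies all clauses of `A` (under some interpretation of the constants `γ`). -/
def SatUIF (T₀ : B.Theory) (γ : Type w) (A : Set (Clause (B.sum E) γ)) : Prop :=
  ∃ (M : Type w) (S : (B.sum E).Structure M) (v : γ → M), Nonempty M ∧
    (@Theory.Model B M (totalize S).bStructure T₀) ∧
    ∀ D ∈ A, WeakSatClause (totalize S) v D

/-- `A` is satisfiable w.r.t. the theory extension `T₀ ∪ K`. -/
def SatExt (T₀ : B.Theory) (K : Set (Clause (B.sum E) ℕ)) (γ : Type w)
    (A : Set (Clause (B.sum E) γ)) : Prop :=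
  ∃ (M : Type w) (S : (B.sum E).Structure M) (v : γ → M), Nonempty M ∧
    (@Theory.Model B M (totalize S).bStructure T₀) ∧
    (∀ C ∈ K, ∀ w : ℕ → M, WeakSatClause (totalize S) w C) ∧
    ∀ D ∈ A, WeakSatClause (totalize S) v D

end PaperLoc


namespace PaperLoc

variable {B E : FirstOrder.Language.{u, v}}

/-- A ground term is flat: the arguments of every extension-headed subterm are constants
(nullary function symbols) of the base signature. -/
def IsFlatGroundTerm (t : (B.sum E).Term Empty) : Prop :=
  ∀ (s : (B.sum E).Term Empty), Subterm s t →
    ∀ {n : ℕ} (f : E.Functions n) (ts : Fin n → (B.sum E).Term Empty),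
      s = Term.func (Sum.inr f) ts →
      ∀ i, ∃ (c : B.Functions 0) (e : Fin 0 → (B.sum E).Term Empty),
        ts i = Term.func (Sum.inl c) e

end PaperLoc

namespace PaperLoc

section Aux

variable {B E : FirstOrder.Language.{u, v}} {M : Type w}

lemma isExtTerm_elim {γ : Type x} {t : (B.sum E).Term γ} (h : IsExtTerm (B := B) (E := E) t) :
    ∃ (n : ℕ) (f : E.Functions n) (ts : Fin n → (B.sum E).Term γ),
      t = Term.func (Sum.inr f) ts := by
  cases t with
  | var a => exact h.elim
  | func f ts =>
    cases f with
    | inl f => exact h.elim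
    | inr f => exact ⟨_, f, ts, rfl⟩

lemma prealize_var_inv {P : PStruct B E M} {γ : Type x} {v : γ → M} {a : γ} {y : M}
    (h : PRealize P v (Term.var a) y) : y = v a := by
  cases h; rfl

lemma prealize_efunc_inv {P : PStruct B E M} {γ : Type x} {v : γ → M} {n : ℕ}
    {f : E.Functions n} {ts : Fin n → (B.sum E).Term γ} {y : M}
    (h : PRealize P v (Term.func (Sum.inr f) ts) y) :
    ∃ xs : Fin n → M, (∀ i, PRealize P v (ts i) (xs i)) ∧ P.efun f xs = some y := by
  cases h with
  | efunc _ _ xs y hh hs => exact ⟨xs, hh, hs⟩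

lemma prealize_subterm {P : PStruct B E M} {γ : Type x} {v : γ → M}
    {u s : (B.sum E).Term γ} (hsub : Subterm u s) :
    ∀ {y : M}, PRealize P v s y → ∃ z, PRealize P v u z := by
  induction hsub with
  | refl t => exact fun h => ⟨_, h⟩
  | func f ts i hsub ih =>
    intro y h
    cases h with
    | bfunc _ _ xs hh => exact ih (hh i)
    | efunc _ _ xs y hh _ => exact ih (hh i)

lemma prealize_val {S : (B.sum E).Structure M} {P : PStruct B E M}
    (hb : ∀ {n : ℕ} (f : B.Functions n) (xs : Fin n → M), P.bfun f xs = S.funMap (Sum.inl f) xs)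
    (he : ∀ {n : ℕ} (f : E.Functions n) (xs : Fin n → M) (y : M),
      P.efun f xs = some y → y = S.funMap (Sum.inr f) xs)
    {γ : Type x} {v : γ → M} {t : (B.sum E).Term γ} {y : M}
    (h : PRealize P v t y) : y = @Term.realize _ M S _ v t := by
  induction h with
  | var a => rfl
  | bfunc f ts xs _ ih =>
    rw [hb]
    show S.funMap (Sum.inl f) xs = S.funMap (Sum.inl f) (fun i => @Term.realize _ M S _ v (ts i))
    congr 1
    exact funext ih
  | efunc f ts xs y _ hsome ih =>
    rw [he f xs y hsome]
    show S.funMap (Sum.inr f) xs = S.funMap (Sum.inr f) (fun i => @Term.realize _ M S _ v (ts i))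
    congr 1
    exact funext ih

lemma restrict_efun_some {S : (B.sum E).Structure M} {T : Set ((B.sum E).Term Empty)}
    {n : ℕ} {f : E.Functions n} {xs : Fin n → M} {y : M}
    (h : (restrict S T).efun f xs = some y) :
    y = S.funMap (Sum.inr f) xs ∧
    ∃ ts : Fin n → (B.sum E).Term Empty, Term.func (Sum.inr f) ts ∈ T ∧
      ∀ i, @Term.realize (B.sum E) M S Empty (fun e => e.elim) (ts i) = xs i := by
  classical
  by_cases hc : ∃ ts : Fin n → (B.sum E).Term Empty,
      Term.func (Sum.inr f) ts ∈ T ∧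
      ∀ i, @Term.realize (B.sum E) M S Empty (fun e => e.elim) (ts i) = xs i
  · refine ⟨?_, hc⟩
    have h2 : (restrict S T).efun f xs = some (S.funMap (Sum.inr f) xs) := dif_pos hc
    rw [h2] at h
    exact (Option.some.inj h).symm
  · have h2 : (restrict S T).efun f xs = none := dif_neg hc
    rw [h2] at h
    cases h

lemma prealize_val_totalize {S : (B.sum E).Structure M} {γ : Type x} {v : γ → M}
    {t : (B.sum E).Term γ} {y : M} (h : PRealize (totalize S) v t y) :
    y = @Term.realize _ M S _ v t :=
  prealize_val (fun _ _ => rfl) (fun _ _ _ hy => (Option.some.inj hy).symm) h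

lemma prealize_val_restrict {S : (B.sum E).Structure M} {T : Set ((B.sum E).Term Empty)}
    {γ : Type x} {v : γ → M} {t : (B.sum E).Term γ} {y : M}
    (h : PRealize (restrict S T) v t y) : y = @Term.realize _ M S _ v t :=
  prealize_val (fun _ _ => rfl) (fun _ _ _ hy => (restrict_efun_some hy).1) h

lemma prealize_totalize {S : (B.sum E).Structure M} {γ : Type x} (v : γ → M)
    (t : (B.sum E).Term γ) : PRealize (totalize S) v t (@Term.realize _ M S _ v t) := by
  induction t with
  | var a => exact .var a
  | func f ts ih =>
    cases f with
    | inl f => exact .bfunc f ts _ ih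
    | inr f => exact .efunc f ts _ _ ih rfl

lemma litdef_totalize {S : (B.sum E).Structure M} {γ : Type x} (v : γ → M)
    (l : Lit (B.sum E) γ) : LitDefined (totalize S) v l := by
  cases l with
  | eq pos t₁ t₂ => exact ⟨⟨_, prealize_totalize v t₁⟩, ⟨_, prealize_totalize v t₂⟩⟩
  | rel pos n r ts => exact fun i => ⟨_, prealize_totalize v (ts i)⟩

lemma litdef_terms {P : PStruct B E M} {γ : Type x} {v : γ → M} {l : Lit (B.sum E) γ}
    (h : LitDefined P v l) : ∀ s ∈ Lit.terms l, ∃ x, PRealize P v s x := by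
  cases l with
  | eq pos t₁ t₂ =>
    intro s hs
    rcases hs with rfl | rfl
    · exact h.1
    · exact h.2
  | rel pos n r ts =>
    rintro s ⟨i, rfl⟩
    exact h i

lemma terms_subst {γ : Type x} {δ : Type y} (l : Lit (B.sum E) γ) (σ : γ → (B.sum E).Term δ)
    {s : (B.sum E).Term δ} (hs : s ∈ Lit.terms (l.subst σ)) :
    ∃ s₀ ∈ Lit.terms l, s = s₀.subst σ := by
  cases l with
  | eq pos t₁ t₂ =>
    rcases hs with rfl | rfl
    · exact ⟨t₁, Or.inl rfl, rfl⟩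
    · exact ⟨t₂, Or.inr rfl, rfl⟩
  | rel pos n r ts =>
    obtain ⟨i, rfl⟩ := hs
    exact ⟨ts i, ⟨i, rfl⟩, rfl⟩

lemma subterm_subst {γ : Type x} {δ : Type y} {σ : γ → (B.sum E).Term δ}
    {t : (B.sum E).Term δ} (s : (B.sum E).Term γ) (h : Subterm t (s.subst σ)) :
    (∃ s₁, Subterm s₁ s ∧ (∃ (n : ℕ) (f : (B.sum E).Functions n)
        (ts : Fin n → (B.sum E).Term γ), s₁ = Term.func f ts) ∧ t = s₁.subst σ)
    ∨ (∃ x, VarInTerm x s ∧ Subterm t (σ x)) := by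
  induction s with
  | var a => exact Or.inr ⟨a, Subterm.refl _, h⟩
  | func f ts ih =>
    rw [show (Term.func f ts).subst σ = Term.func f (fun i => (ts i).subst σ) from rfl] at h
    cases h with
    | refl => exact Or.inl ⟨Term.func f ts, Subterm.refl _, ⟨_, f, ts, rfl⟩, rfl⟩
    | func _ _ i h' =>
      rcases ih i h' with ⟨s₁, h1, h2, h3⟩ | ⟨x, h1, h2⟩
      · exact Or.inl ⟨s₁, Subterm.func f ts i h1, h2, h3⟩
      · exact Or.inr ⟨x, Subterm.func f ts i h1, h2⟩

lemma relMap_restrict_iff {S : (B.sum E).Structure M} {T : Set ((B.sum E).Term Empty)}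
    {n : ℕ} (r : (B.sum E).Relations n) (xs : Fin n → M) :
    (restrict S T).relMap r xs ↔ (totalize S).relMap r xs := by
  cases r <;> exact Iff.rfl

end Aux

end PaperLoc

/-- if `K` is a set of flat and linear clauses, `T` a finite subterm-closed set
of flat ground terms containing the ground terms of `K`, and `M` a total model of
`T₀ ∪ K[T]`, then the restriction `M|_T` is a weak partial model of `T₀ ∪ K`. -/
theorem statement_12 (B0 E : FirstOrder.Language.{u, v}) (T₀ : B0.Theory)
    (K : Set (PaperLoc.Clause (B0.sum E) ℕ))
    (hKflat : ∀ C ∈ K, PaperLoc.ClauseFlat (B := B0) (E := E) C ∧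
      PaperLoc.ClauseLinear (B := B0) (E := E) C)
    (T : Set ((B0.sum E).Term Empty)) (hfin : T.Finite)
    (hflatT : ∀ t ∈ T, PaperLoc.IsFlatGroundTerm (B := B0) (E := E) t)
    (hsub : ∀ t s : (B0.sum E).Term Empty, s ∈ T → PaperLoc.Subterm t s → t ∈ T)
    (hK : ∀ t : (B0.sum E).Term Empty, PaperLoc.GroundTermOfK (B := B0) (E := E) K t → t ∈ T)
    (M : Type w) (S : (B0.sum E).Structure M)
    (hM : PaperLoc.WeakModel T₀ (PaperLoc.instancesGround (B := B0) (E := E) K T) M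
      (PaperLoc.totalize S)) :
    PaperLoc.WeakModel T₀ K M (PaperLoc.restrict S T) := by
  classical
  open PaperLoc in
  refine ⟨hM.nonempty, hM.base, ?_⟩
  intro C hC v
  by_cases hundef : ∃ l ∈ C, ¬ LitDefined (restrict S T) v l
  · exact Or.inl hundef
  push_neg at hundef
  obtain ⟨hflat, hlin⟩ := hKflat C hC
  -- every extension term of `C` has a defining tuple of terms from `T`
  have hwit : ∀ (n : ℕ) (f : E.Functions n) (xi : Fin n → ℕ),
      TermInClause (Term.func (Sum.inr f) (fun j => Term.var (xi j))) C →
      ∃ gs : Fin n → (B0.sum E).Term Empty,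
        Term.func (Sum.inr f) gs ∈ T ∧
        ∀ j, @Term.realize (B0.sum E) M S Empty (fun e => e.elim) (gs j) = v (xi j) := by
    intro n f xi hmem
    obtain ⟨l, hl, s, hs, hsubt⟩ := hmem
    obtain ⟨y, hy⟩ := litdef_terms (hundef l hl) s hs
    obtain ⟨z, hz⟩ := prealize_subterm hsubt hy
    obtain ⟨xs, hxs, hsome⟩ := prealize_efunc_inv hz
    obtain ⟨-, ts', hT, hre⟩ := restrict_efun_some hsome
    refine ⟨ts', hT, fun j => ?_⟩
    rw [hre j]
    exact prealize_var_inv (hxs j)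
  -- construction of the substitution σ
  have hσex : ∀ x : ℕ, ∃ tx : (B0.sum E).Term ℕ,
      (¬ VarBelowExt (B := B0) (E := E) x C → tx = Term.var x) ∧
      (@Term.realize (B0.sum E) M S ℕ v tx = v x) ∧
      (∀ (n : ℕ) (f : E.Functions n) (xi : Fin n → ℕ) (i : Fin n)
        (h : TermInClause (Term.func (Sum.inr f) (fun j => Term.var (xi j))) C),
        xi i = x → tx = ((hwit n f xi h).choose i).relabel Empty.elim) := by
    intro x
    by_cases hv : VarBelowExt (B := B0) (E := E) x C
    · obtain ⟨u, hext, huC, hxu⟩ := hv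
      obtain ⟨n, f, ts, rfl⟩ := isExtTerm_elim hext
      obtain ⟨l, hl, s, hs, hsubt⟩ := huC
      have hargs : ∀ i, ∃ z, ts i = Term.var z :=
        hflat l hl s hs _ hsubt f ts rfl
      choose xi hxi using hargs
      have hts : ts = fun j => Term.var (xi j) := funext hxi
      subst hts
      have hxi' : ∃ i, xi i = x := by
        cases hxu with
        | func _ _ i h' =>
          cases h'
          exact ⟨i, rfl⟩
      obtain ⟨i, hix⟩ := hxi'
      have huC' : TermInClause (Term.func (Sum.inr f) (fun j => Term.var (xi j))) C :=
        ⟨l, hl, s, hs, hsubt⟩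
      refine ⟨((hwit n f xi huC').choose i).relabel Empty.elim, ?_, ?_, ?_⟩
      · intro hnv
        refine absurd ⟨Term.func (Sum.inr f) (fun j => Term.var (xi j)), trivial, huC',
          Subterm.func _ _ i ?_⟩ hnv
        show Subterm (Term.var x) (Term.var (xi i))
        rw [hix]
        exact Subterm.refl _
      · rw [Term.realize_relabel]
        have hval : (v ∘ (Empty.elim : Empty → ℕ)) = fun e => e.elim :=
          funext fun e => e.elim
        rw [hval, (hwit n f xi huC').choose_spec.2 i, hix]
      · intro n' f' xi' i' h' hx'
        have hequ : Term.func (Sum.inr f) (fun j => Term.var (xi j))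
            = Term.func (L := B0.sum E) (Sum.inr f') (fun j => Term.var (xi' j)) := by
          apply hlin.1 (Term.func (Sum.inr f) (fun j => Term.var (xi j)))
            (Term.func (Sum.inr f') (fun j => Term.var (xi' j))) trivial trivial huC' h'
          refine ⟨x, Subterm.func _ _ i ?_, Subterm.func _ _ i' ?_⟩
          · show Subterm (Term.var x) (Term.var (xi i))
            rw [hix]; exact Subterm.refl _
          · show Subterm (Term.var x) (Term.var (xi' i'))
            rw [hx']; exact Subterm.refl _
        injection hequ with hn hf hts
        subst hn
        have hf' : f = f' := Sum.inr.inj (eq_of_heq hf)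
        subst hf'
        have hxi2 : xi = xi' := by
          funext j
          have := congrFun (eq_of_heq hts) j
          injection this
        subst hxi2
        have hii : i = i' := by
          refine hlin.2 _ huC' f (fun j => Term.var (xi j)) rfl i i' x ?_ ?_
          · show Term.var (xi i) = Term.var x; rw [hix]
          · show Term.var (xi i') = Term.var x; rw [hx']
        subst hii
        rfl
    · refine ⟨Term.var x, fun _ => rfl, rfl, ?_⟩
      intro n' f' xi' i' h' hx'
      refine absurd ⟨Term.func (Sum.inr f') (fun j => Term.var (xi' j)), trivial, h',
        Subterm.func _ _ i' ?_⟩ hv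
      show Subterm (Term.var x) (Term.var (xi' i'))
      rw [hx']
      exact Subterm.refl _
  choose σ hσ1 hσ2 hσ3 using hσex
  -- D := C[σ] is in K[T]
  have hDmem : C.map (fun l => PaperLoc.Lit.subst l σ)
      ∈ instancesGround (B := B0) (E := E) K T := by
    refine ⟨C, hC, σ, rfl, fun x h => hσ1 x h, ?_⟩
    intro t htext htD
    obtain ⟨l, hl, s, hs, hsubt⟩ := htD
    obtain ⟨l₀, hl₀, rfl⟩ := List.mem_map.mp hl
    obtain ⟨s₀, hs₀, rfl⟩ := terms_subst l₀ σ hs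
    rcases subterm_subst s₀ hsubt with ⟨s₁, hs₁, ⟨m, g, ts₁, rfl⟩, rfl⟩ | ⟨x, hxin, hsubσ⟩
    · cases g with
      | inl g => exact absurd htext (fun h => h)
      | inr f =>
        have hargs : ∀ i, ∃ z, ts₁ i = Term.var z := hflat l₀ hl₀ s₀ hs₀ _ hs₁ f ts₁ rfl
        choose y hy using hargs
        have hts : ts₁ = fun j => Term.var (y j) := funext hy
        subst hts
        have hmem : TermInClause (Term.func (Sum.inr f) (fun j => Term.var (y j))) C :=
          ⟨l₀, hl₀, s₀, hs₀, hs₁⟩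
        refine ⟨Term.func (Sum.inr f) (hwit m f y hmem).choose,
          (hwit m f y hmem).choose_spec.1, ?_⟩
        show Term.func (Sum.inr f) (fun j => ((fun j => Term.var (y j)) j).subst σ)
          = Term.func (Sum.inr f) (fun j => ((hwit m f y hmem).choose j).relabel Empty.elim)
        congr 1
        funext j
        exact hσ3 (y j) m f y j hmem rfl
    · by_cases hv : VarBelowExt (B := B0) (E := E) x C
      · obtain ⟨u, hext, huC, hxu⟩ := hv
        obtain ⟨n, f, ts, rfl⟩ := isExtTerm_elim hext
        obtain ⟨l', hl', s', hs', hsubt'⟩ := huC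
        have hargs : ∀ i, ∃ z, ts i = Term.var z := hflat l' hl' s' hs' _ hsubt' f ts rfl
        choose xi hxi using hargs
        have hts : ts = fun j => Term.var (xi j) := funext hxi
        subst hts
        have hxi' : ∃ i, xi i = x := by
          cases hxu with
          | func _ _ i h' =>
            cases h'
            exact ⟨i, rfl⟩
        obtain ⟨i, hix⟩ := hxi'
        have huC' : TermInClause (Term.func (Sum.inr f) (fun j => Term.var (xi j))) C :=
          ⟨l', hl', s', hs', hsubt'⟩
        have hσx := hσ3 x n f xi i huC' hix
        obtain ⟨c, e, hce⟩ :=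
          hflatT _ (hwit n f xi huC').choose_spec.1 _ (Subterm.refl _) f _ rfl i
        rw [hσx, hce] at hsubσ
        rw [show (Term.func (Sum.inl c) e).relabel (Empty.elim : Empty → ℕ)
            = Term.func (Sum.inl c) (fun j => (e j).relabel Empty.elim) from rfl] at hsubσ
        cases hsubσ with
        | refl => exact absurd htext (fun h => h)
        | func _ _ j _ => exact j.elim0
      · rw [hσ1 x hv] at hsubσ
        cases hsubσ
        exact absurd htext (fun h => h)
  -- use the model of K[T]
  rcases hM.clauses _ hDmem v with ⟨l, hl, hnd⟩ | ⟨l, hl, hh⟩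
  · exact absurd (litdef_totalize v l) hnd
  obtain ⟨l₀, hl₀, rfl⟩ := List.mem_map.mp hl
  refine Or.inr ⟨l₀, hl₀, ?_⟩
  have hdef := hundef l₀ hl₀
  have hrs : ∀ t : (B0.sum E).Term ℕ,
      @Term.realize (B0.sum E) M S ℕ v (t.subst σ) = @Term.realize (B0.sum E) M S ℕ v t := by
    intro t
    rw [Term.realize_subst]
    congr 1
    exact funext fun x => hσ2 x
  cases l₀ with
  | eq pos t₁ t₂ =>
    obtain ⟨x₁, x₂, h₁, h₂, hcond⟩ := hh
    obtain ⟨⟨y₁, hy₁⟩, ⟨y₂, hy₂⟩⟩ := hdef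
    have e₁ : x₁ = y₁ := by
      rw [prealize_val_totalize h₁, prealize_val_restrict hy₁, hrs]
    have e₂ : x₂ = y₂ := by
      rw [prealize_val_totalize h₂, prealize_val_restrict hy₂, hrs]
    refine ⟨y₁, y₂, hy₁, hy₂, ?_⟩
    rw [← e₁, ← e₂]
    exact hcond
  | rel pos n r ts =>
    obtain ⟨xs, hxs, hcond⟩ := hh
    choose ys hys using fun i => hdef i
    have hxy : xs = ys := by
      funext i
      rw [prealize_val_totalize (hxs i), prealize_val_restrict (hys i), hrs]
    refine ⟨ys, hys, ?_⟩
    rw [← hxy]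
    cases pos with
    | false =>
      simp only [if_neg, Bool.false_eq_true, if_false] at hcond ⊢
      rw [relMap_restrict_iff]
      exact hcond
    | true =>
      simp only [if_pos, if_true] at hcond ⊢
      rw [relMap_restrict_iff]
      exact hcond
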